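/- Let (M,g) be a compact Riemannian manifold and let Z be the set of maps u in H^1(M, R^2) with zero average, i.e. ∫_M u = 0. Then for every ε > 0, the infimum of the Ginzburg-Landau energy E_ε(u) = ∫_M (1/2)|du|^2 + ε^{-2} W(u) over u ∈ Z is strictly positive; in fact E_ε(u) ≥ min{λ_1(M)/8, W(1/2)/ε^2} · vol(M)/2 for all u ∈ Z, where λ_1(M) is the first nonzero eigenvalue of the Laplacian. -/
import Mathlib


open MeasureTheory

noncomputable section

/-- On a compact Riemannian manifold (abstracted as a finite measure
space of positive total volume), for a map `u : M → ℝ²` of zero average, with `Du`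
denoting the pointwise norm `|du|` of its differential and `lam1` the Poincaré
constant, the Ginzburg-Landau energy `E_ε(u) = ∫ (1/2)|du|² + ε⁻² W(u)` is bounded
below by `min (λ₁/8) (W(1/2)/ε²) · vol(M)/2 > 0`. -/
theorem stmt0 {M : Type*} [MeasurableSpace M] (μ : Measure M) [IsFiniteMeasure μ]
    (hμpos : μ Set.univ ≠ 0)
    (W : EuclideanSpace ℝ (Fin 2) → ℝ)
    (hW1 : ∀ z : EuclideanSpace ℝ (Fin 2), ‖z‖ < 2 → W z = (1 / 4) * (1 - ‖z‖ ^ 2) ^ 2)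
    (hW2 : ∀ z : EuclideanSpace ℝ (Fin 2), 2 ≤ ‖z‖ → 2 ≤ W z)
    (lam1 : ℝ) (hlam1 : 0 < lam1)
    (ε : ℝ) (hε : 0 < ε)
    (u : M → EuclideanSpace ℝ (Fin 2)) (Du : M → ℝ)
    (hu_int : Integrable u μ)
    (hDu_int : Integrable (fun x => Du x ^ 2) μ)
    (hWu_int : Integrable (fun x => W (u x)) μ)
    (hnu_int : Integrable (fun x => ‖u x‖ ^ 2) μ)
    (hPoincare : lam1 * ∫ x, ‖u x‖ ^ 2 ∂μ ≤ ∫ x, Du x ^ 2 ∂μ)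
    (hmean : ∫ x, u x ∂μ = 0) :
    min (lam1 / 8) (W (EuclideanSpace.single (0 : Fin 2) ((1 : ℝ) / 2)) / ε ^ 2)
        * (μ Set.univ).toReal / 2
      ≤ ∫ x, ((1 / 2) * Du x ^ 2 + (ε ^ 2)⁻¹ * W (u x)) ∂μ ∧
    0 < ∫ x, ((1 / 2) * Du x ^ 2 + (ε ^ 2)⁻¹ * W (u x)) ∂μ := by
  have hε2 : (0 : ℝ) < ε ^ 2 := by positivity
  -- value of W at the special point
  have hnorm : ‖EuclideanSpace.single (0 : Fin 2) ((1 : ℝ) / 2)‖ = 1 / 2 := by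
    rw [EuclideanSpace.norm_single]; norm_num
  have hW0 : W (EuclideanSpace.single (0 : Fin 2) ((1 : ℝ) / 2)) = 9 / 64 := by
    rw [hW1 _ (by rw [hnorm]; norm_num), hnorm]; norm_num
  set c : ℝ := min (lam1 / 8) (W (EuclideanSpace.single (0 : Fin 2) ((1 : ℝ) / 2)) / ε ^ 2)
    with hc
  have hcpos : 0 < c := by
    apply lt_min (by linarith)
    rw [hW0]; positivity
  have hWnonneg : ∀ z : EuclideanSpace ℝ (Fin 2), 0 ≤ W z := by
    intro z
    rcases lt_or_ge ‖z‖ 2 with h | h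
    · rw [hW1 z h]; positivity
    · linarith [hW2 z h]
  -- pointwise lower bound
  have key : ∀ x, c ≤ (lam1 / 2) * ‖u x‖ ^ 2 + (ε ^ 2)⁻¹ * W (u x) := by
    intro x
    rcases lt_or_ge ‖u x‖ (1 / 2) with h | h
    · have h2 : ‖u x‖ < 2 := by linarith
      have hWx : W (u x) = (1 / 4) * (1 - ‖u x‖ ^ 2) ^ 2 := hW1 _ h2
      have hn : (0 : ℝ) ≤ ‖u x‖ := norm_nonneg _
      have ht2 : ‖u x‖ ^ 2 ≤ 1 / 4 := by nlinarith
      have hWge : 9 / 64 ≤ W (u x) := by rw [hWx]; nlinarith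
      have h1 : c ≤ W (EuclideanSpace.single (0 : Fin 2) ((1 : ℝ) / 2)) / ε ^ 2 :=
        min_le_right _ _
      rw [hW0] at h1
      have h3 : (9 : ℝ) / 64 / ε ^ 2 ≤ (ε ^ 2)⁻¹ * W (u x) := by
        rw [div_eq_inv_mul]
        exact mul_le_mul_of_nonneg_left hWge (by positivity)
      nlinarith [norm_nonneg (u x), sq_nonneg ‖u x‖, sq_nonneg (1 - ‖u x‖^2)]
    · have h1 : c ≤ lam1 / 8 := min_le_left _ _
      have h2 : lam1 / 8 ≤ (lam1 / 2) * ‖u x‖ ^ 2 := by nlinarith [sq_nonneg (‖u x‖ - 1/2)]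
      have h3 : 0 ≤ (ε ^ 2)⁻¹ * W (u x) := by
        have := hWnonneg (u x); positivity
      linarith
  -- integrate the pointwise bound
  have hint1 : Integrable (fun x => (lam1 / 2) * ‖u x‖ ^ 2 + (ε ^ 2)⁻¹ * W (u x)) μ :=
    (hnu_int.const_mul _).add (hWu_int.const_mul _)
  have hmono : c * (μ Set.univ).toReal
      ≤ ∫ x, ((lam1 / 2) * ‖u x‖ ^ 2 + (ε ^ 2)⁻¹ * W (u x)) ∂μ := by
    have := integral_mono (integrable_const c) hint1 key
    rwa [integral_const, smul_eq_mul, mul_comm] at this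
  have hsplit1 : ∫ x, ((lam1 / 2) * ‖u x‖ ^ 2 + (ε ^ 2)⁻¹ * W (u x)) ∂μ
      = (lam1 / 2) * ∫ x, ‖u x‖ ^ 2 ∂μ + (ε ^ 2)⁻¹ * ∫ x, W (u x) ∂μ := by
    rw [integral_add (hnu_int.const_mul _) (hWu_int.const_mul _),
      integral_const_mul, integral_const_mul]
  have hsplit2 : ∫ x, ((1 / 2) * Du x ^ 2 + (ε ^ 2)⁻¹ * W (u x)) ∂μ
      = (1 / 2) * ∫ x, Du x ^ 2 ∂μ + (ε ^ 2)⁻¹ * ∫ x, W (u x) ∂μ := by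
    rw [integral_add (hDu_int.const_mul _) (hWu_int.const_mul _),
      integral_const_mul, integral_const_mul]
  have hmain : c * (μ Set.univ).toReal
      ≤ ∫ x, ((1 / 2) * Du x ^ 2 + (ε ^ 2)⁻¹ * W (u x)) ∂μ := by
    rw [hsplit2]
    rw [hsplit1] at hmono
    linarith
  have hvolpos : 0 < (μ Set.univ).toReal :=
    ENNReal.toReal_pos hμpos (measure_ne_top μ _)
  constructor
  · nlinarith
  · nlinarith
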